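/- arXiv:1505.07493 — 7 statements merged into one kernel-verified Lean document; each statement's English description precedes it below -/
import Mathlib

section
/- Let H be a finite subgroup of the ring automorphism group of A such that R ⊆ A^H, and assume 𝓑 is σ-trace orthogonal with respect to H. Then for all x = (x_1, …, x_n), y = (y_1, …, y_n) ∈ A^n, writing x_i = ∑_{j=1}^r α_{ij} v_j and y_i = ∑_{k=1}^r β_{ik} v_k with α_{ij}, β_{ik} ∈ R, one has Tr_H(⟨x,y⟩_{A^n}) = ∑_{i=1}^n ∑_{j=1}^r α_{ij} · Tr_H(v_j σ(v_j)) · σ(β_{ij}). -/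
/-- Lemma: if `𝓑 = (v_1, …, v_r)` is a σ-trace-orthogonal `R`-basis of `A`
with respect to a finite subgroup `H` of `Aut(A)` whose fixed ring contains
`R`, then the trace of the standard σ-hermitian form collapses to the
diagonal terms:
`Tr_H ⟨x,y⟩ = ∑ i ∑ j, α i j * Tr_H (v j * σ (v j)) * σ (β i j)`. -/
theorem stmt_4 {A : Type*} [Ring A] [Fintype A] (R : Subring A)
    (r : ℕ) (v : Fin r → A)
    (hbasis : ∀ a : A, ∃! c : Fin r → R, a = ∑ i, (c i : A) * v i)
    (σ : A → A)
    (hbij : Function.Bijective σ)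
    (hadd : ∀ a b : A, σ (a + b) = σ a + σ b)
    (hmul : ∀ a b : A, σ (a * b) = σ b * σ a)
    (hone : σ 1 = 1)
    (hinv : ∀ a : A, σ (σ a) = a)
    (hσR : σ '' (R : Set A) = (R : Set A))
    (H : Subgroup (A ≃+* A)) [Fintype H]
    (hRfix : ∀ x ∈ R, ∀ h ∈ H, h x = x)
    (htro : ∀ i j : Fin r, (∑ h : H, (h : A ≃+* A) (v i * σ (v j))) = 0 ↔ i ≠ j)
    (n : ℕ) (x y : Fin n → A) (α β : Fin n → Fin r → R)
    (hx : ∀ i, x i = ∑ j, (α i j : A) * v j)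
    (hy : ∀ i, y i = ∑ k, (β i k : A) * v k) :
    (∑ h : H, (h : A ≃+* A) (∑ i, x i * σ (y i)))
      = ∑ i, ∑ j, (α i j : A) * (∑ h : H, (h : A ≃+* A) (v j * σ (v j))) *
          σ ((β i j : A)) := by
  -- σ of elements of R stays in R, hence is fixed by H
  have hσfix : ∀ b ∈ R, ∀ h : A ≃+* A, h ∈ H → h (σ b) = σ b := by
    intro b hb h hh
    have : σ b ∈ (R : Set A) := by
      rw [← hσR]; exact ⟨b, hb, rfl⟩
    exact hRfix _ this h hh
  -- σ commutes with finite sums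
  have hσsum : ∀ (s : Finset (Fin r)) (f : Fin r → A),
      σ (∑ k ∈ s, f k) = ∑ k ∈ s, σ (f k) := by
    intro s f
    exact map_sum (AddMonoidHom.mk' σ hadd) f s
  -- pushing h through everything
  have step1 : ∀ h : A ≃+* A, h ∈ H →
      h (∑ i, x i * σ (y i))
        = ∑ i, ∑ j, ∑ k, (α i j : A) * h (v j * σ (v k)) * σ ((β i k : A)) := by
    intro h hh
    rw [map_sum]
    refine Finset.sum_congr rfl fun i _ => ?_
    rw [hx, hy, hσsum, Finset.sum_mul_sum, map_sum]
    refine Finset.sum_congr rfl fun j _ => ?_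
    rw [map_sum]
    refine Finset.sum_congr rfl fun k _ => ?_
    rw [hmul, show (α i j : A) * v j * (σ (v k) * σ ((β i k : A)))
        = (α i j : A) * (v j * σ (v k)) * σ ((β i k : A)) by simp [mul_assoc],
      map_mul, map_mul, hRfix _ (α i j).2 h hh, hσfix _ (β i k).2 h hh]
  calc (∑ h : H, (h : A ≃+* A) (∑ i, x i * σ (y i)))
      = ∑ h : H, ∑ i, ∑ j, ∑ k,
          (α i j : A) * (h : A ≃+* A) (v j * σ (v k)) * σ ((β i k : A)) := by
        exact Finset.sum_congr rfl fun h _ => step1 h h.2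
    _ = ∑ i, ∑ j, ∑ k,
          (α i j : A) * (∑ h : H, (h : A ≃+* A) (v j * σ (v k))) * σ ((β i k : A)) := by
        rw [Finset.sum_comm]
        refine Finset.sum_congr rfl fun i _ => ?_
        rw [Finset.sum_comm]
        refine Finset.sum_congr rfl fun j _ => ?_
        rw [Finset.sum_comm]
        refine Finset.sum_congr rfl fun k _ => ?_
        rw [Finset.mul_sum, Finset.sum_mul]
    _ = ∑ i, ∑ j, (α i j : A) * (∑ h : H, (h : A ≃+* A) (v j * σ (v j))) *
          σ ((β i j : A)) := by
        refine Finset.sum_congr rfl fun i _ => Finset.sum_congr rfl fun j _ => ?_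
        refine Finset.sum_eq_single j (fun k _ hk => ?_) (by simp)
        rw [(htro j k).mpr (Ne.symm hk), mul_zero, zero_mul]
end

section
/- Let H be a finite subgroup of the ring automorphism group of A such that R ⊆ A^H, and assume 𝓑 is σ-pseudo-self-dual with respect to H. Then for all x, y ∈ A^n, if ⟨x,y⟩_{A^n} = 0 then ⟨Φ(x),Φ(y)⟩_{R^{nr}} = 0. -/
/-- Lemma: if `𝓑 = (v_1, …, v_r)` is a σ-pseudo-self-dual `R`-basis of `A`
with respect to a finite subgroup `H` of `Aut(A)` whose fixed ring contains
`R`, then the coordinate map `Φ` preserves orthogonality: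
`⟨x,y⟩_{A^n} = 0` implies `⟨Φ(x),Φ(y)⟩_{R^{nr}} = 0`. -/
theorem stmt_5 {A : Type*} [Ring A] [Fintype A] (R : Subring A)
    (r : ℕ) (v : Fin r → A) (ρ : A → Fin r → R)
    (hρ : ∀ a : A, a = ∑ i, (ρ a i : A) * v i)
    (huniq : ∀ c : Fin r → R, ∑ i, (c i : A) * v i = 0 → ∀ i, c i = 0)
    (σ : A → A)
    (hbij : Function.Bijective σ)
    (hadd : ∀ a b : A, σ (a + b) = σ a + σ b)
    (hmul : ∀ a b : A, σ (a * b) = σ b * σ a)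
    (hone : σ 1 = 1)
    (hinv : ∀ a : A, σ (σ a) = a)
    (hσR : σ '' (R : Set A) = (R : Set A))
    (H : Subgroup (A ≃+* A)) [Fintype H]
    (hRfix : ∀ x ∈ R, ∀ h ∈ H, h x = x)
    (htro : ∀ i j : Fin r, (∑ h : H, (h : A ≃+* A) (v i * σ (v j))) = 0 ↔ i ≠ j)
    (γ : A)
    (hγl : ∀ a : A, γ * a = 0 → a = 0)
    (hγr : ∀ a : A, a * γ = 0 → a = 0)
    (hγR : ∀ x ∈ R, γ * x = x * γ)
    (hγtr : ∀ i : Fin r, (∑ h : H, (h : A ≃+* A) (v i * σ (v i))) = γ)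
    (n : ℕ) (x y : Fin n → A)
    (hxy : ∑ i, x i * σ (y i) = 0) :
    ∑ i, ∑ j, (ρ (x i) j : A) * σ ((ρ (y i) j : A)) = 0 := by
  classical
  have hσsum : ∀ (s : Finset (Fin r)) (g : Fin r → A),
      σ (∑ k ∈ s, g k) = ∑ k ∈ s, σ (g k) :=
    fun s g => map_sum (AddMonoidHom.mk' σ hadd) g s
  have hbmem : ∀ i j, σ ((ρ (y i) j : A)) ∈ R := by
    intro i j
    have h1 : σ ((ρ (y i) j : A)) ∈ σ '' (R : Set A) := ⟨_, (ρ (y i) j).2, rfl⟩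
    rwa [hσR] at h1
  have key : ∀ (c d : Fin r → A), (∀ j, c j ∈ R) → (∀ j, σ (d j) ∈ R) →
      (∑ h : H, (h : A ≃+* A) ((∑ j, c j * v j) * σ (∑ j, d j * v j)))
        = γ * ∑ j, c j * σ (d j) := by
    intro c d hc hd
    have e1 : (∑ j, c j * v j) * σ (∑ j, d j * v j)
        = ∑ j, ∑ k, c j * (v j * σ (v k)) * σ (d k) := by
      rw [hσsum, Finset.sum_mul_sum]
      refine Finset.sum_congr rfl fun j _ => Finset.sum_congr rfl fun k _ => ?_
      rw [hmul]
      simp [mul_assoc]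
    rw [e1]
    have e2 : (∑ h : H, (h : A ≃+* A) (∑ j, ∑ k, c j * (v j * σ (v k)) * σ (d k)))
        = ∑ j, ∑ k, c j * (∑ h : H, (h : A ≃+* A) (v j * σ (v k))) * σ (d k) := by
      simp only [map_sum]
      rw [Finset.sum_comm]
      refine Finset.sum_congr rfl fun j _ => ?_
      rw [Finset.sum_comm]
      refine Finset.sum_congr rfl fun k _ => ?_
      rw [Finset.mul_sum, Finset.sum_mul]
      refine Finset.sum_congr rfl fun h _ => ?_
      rw [map_mul, map_mul, hRfix _ (hc j) _ h.2, hRfix _ (hd k) _ h.2]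
    rw [e2]
    have e3 : ∀ j : Fin r,
        (∑ k, c j * (∑ h : H, (h : A ≃+* A) (v j * σ (v k))) * σ (d k))
          = γ * (c j * σ (d j)) := by
      intro j
      rw [Finset.sum_eq_single j]
      · rw [hγtr j, ← mul_assoc, ← hγR _ (hc j), mul_assoc]
      · intro k _ hk
        rw [(htro j k).mpr (Ne.symm hk), mul_zero, zero_mul]
      · intro hj; exact absurd (Finset.mem_univ j) hj
    rw [Finset.sum_congr rfl fun j _ => e3 j, ← Finset.mul_sum]
  have main : γ * (∑ i, ∑ j, (ρ (x i) j : A) * σ ((ρ (y i) j : A))) = 0 := by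
    have h0 : (∑ h : H, (h : A ≃+* A) (∑ i, x i * σ (y i))) = 0 := by
      rw [hxy]; simp
    have h1 : (∑ h : H, (h : A ≃+* A) (∑ i, x i * σ (y i)))
        = ∑ i, ∑ h : H, (h : A ≃+* A) (x i * σ (y i)) := by
      simp only [map_sum]; rw [Finset.sum_comm]
    have h2 : ∀ i : Fin n, (∑ h : H, (h : A ≃+* A) (x i * σ (y i)))
        = γ * ∑ j, (ρ (x i) j : A) * σ ((ρ (y i) j : A)) := by
      intro i
      have hthis := key (fun j => ((ρ (x i) j : A))) (fun j => ((ρ (y i) j : A)))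
        (fun j => (ρ (x i) j).2) (hbmem i)
      simp only [← hρ (x i), ← hρ (y i)] at hthis
      exact hthis
    rw [h1, Finset.sum_congr rfl fun i _ => h2 i, ← Finset.mul_sum] at h0
    exact h0
  exact hγl _ main
end

section
/- Let H be a finite subgroup of the ring automorphism group of A with R ⊆ A^H, assume 𝓑 is σ-pseudo-self-dual with respect to H, and let C ⊆ A^n be a left A-submodule (a linear code of length n over A). Assume furthermore the cardinality identities |C| · |C^⊥| = |A|^n and |Φ(C)| · |Φ(C)^⊥| = |R|^{rn} (these hold whenever A and R are finite Frobenius rings, by Wood's theorem). Then Φ(C^⊥) = Φ(C)^⊥. -/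
/-- Theorem: if `𝓑` is a σ-pseudo-self-dual `R`-basis of `A` with respect to a
finite subgroup `H` of `Aut(A)` whose fixed ring contains `R`, and `C` is a
linear code of length `n` over `A`, then (assuming the cardinality identities
`|C|·|C^⊥| = |A|^n` and `|Φ(C)|·|Φ(C)^⊥| = |R|^{rn}`, which hold when `A` and
`R` are Frobenius) `Φ(C^⊥) = Φ(C)^⊥`. -/
theorem stmt_6 {A : Type*} [Ring A] [Fintype A] (R : Subring A)
    (r : ℕ) (v : Fin r → A) (ρ : A → Fin r → R)
    (hρ : ∀ a : A, a = ∑ i, (ρ a i : A) * v i)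
    (huniq : ∀ c : Fin r → R, ∑ i, (c i : A) * v i = 0 → ∀ i, c i = 0)
    (σ : A → A)
    (hbij : Function.Bijective σ)
    (hadd : ∀ a b : A, σ (a + b) = σ a + σ b)
    (hmul : ∀ a b : A, σ (a * b) = σ b * σ a)
    (hone : σ 1 = 1)
    (hinv : ∀ a : A, σ (σ a) = a)
    (hσR : σ '' (R : Set A) = (R : Set A))
    (H : Subgroup (A ≃+* A)) [Fintype H]
    (hRfix : ∀ x ∈ R, ∀ h ∈ H, h x = x)
    (htro : ∀ i j : Fin r, (∑ h : H, (h : A ≃+* A) (v i * σ (v j))) = 0 ↔ i ≠ j)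
    (γ : A)
    (hγl : ∀ a : A, γ * a = 0 → a = 0)
    (hγr : ∀ a : A, a * γ = 0 → a = 0)
    (hγR : ∀ x ∈ R, γ * x = x * γ)
    (hγtr : ∀ i : Fin r, (∑ h : H, (h : A ≃+* A) (v i * σ (v i))) = γ)
    (n : ℕ) (C : Submodule A (Fin n → A))
    (hcardA : Nat.card C *
        Nat.card {w : Fin n → A | ∀ c ∈ C, ∑ i, w i * σ (c i) = 0} =
        Nat.card A ^ n)
    (hcardR : Nat.card ((fun x : Fin n → A => fun i j => ρ (x i) j) ''
          (C : Set (Fin n → A))) *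
        Nat.card {u : Fin n → Fin r → R |
          ∀ x ∈ C, ∑ i, ∑ j, (u i j : A) * σ ((ρ (x i) j : A)) = 0} =
        Nat.card R ^ (r * n)) :
    (fun x : Fin n → A => fun i j => ρ (x i) j) ''
        {w : Fin n → A | ∀ c ∈ C, ∑ i, w i * σ (c i) = 0}
      = {u : Fin n → Fin r → R |
          ∀ x ∈ C, ∑ i, ∑ j, (u i j : A) * σ ((ρ (x i) j : A)) = 0} := by

  classical
  set Φ : (Fin n → A) → (Fin n → Fin r → R) := fun x => fun i j => ρ (x i) j with hΦ
  set Cperp : Set (Fin n → A) := {w : Fin n → A | ∀ c ∈ C, ∑ i, w i * σ (c i) = 0}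
    with hCperp
  set Dperp : Set (Fin n → Fin r → R) := {u : Fin n → Fin r → R |
      ∀ x ∈ C, ∑ i, ∑ j, (u i j : A) * σ ((ρ (x i) j : A)) = 0} with hDperp
  have hσ0 : σ 0 = 0 := by
    have h := hadd 0 0
    simp only [add_zero] at h
    exact (left_eq_add.mp h)
  have hσsum : ∀ (s : Finset (Fin r)) (f : Fin r → A),
      σ (∑ k ∈ s, f k) = ∑ k ∈ s, σ (f k) := by
    intro s f
    induction s using Finset.induction with
    | empty => simpa using hσ0
    | insert _ _ hnot ih =>
      rw [Finset.sum_insert hnot, hadd, ih, Finset.sum_insert hnot]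
  have hσRmem : ∀ x : A, x ∈ R → σ x ∈ R := by
    intro x hx
    have : σ x ∈ σ '' (R : Set A) := ⟨x, hx, rfl⟩
    rwa [hσR] at this
  -- ρ is injective
  have hρinj : Function.Injective ρ := by
    intro a b hab
    rw [hρ a, hρ b, hab]
  -- the key inclusion
  have hsub : Φ '' Cperp ⊆ Dperp := by
    rintro u ⟨w, hw, rfl⟩ x hx
    have h0 : ∑ i, w i * σ (x i) = 0 := hw x hx
    have htr0 : ∑ h : H, (h : A ≃+* A) (∑ i, w i * σ (x i)) = 0 := by
      rw [h0]; simp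
    have hexp : ∀ h : H, (h : A ≃+* A) (∑ i, w i * σ (x i)) =
        ∑ i, ∑ j, ∑ k, (ρ (w i) j : A) * (h : A ≃+* A) (v j * σ (v k)) *
          σ ((ρ (x i) k : A)) := by
      intro h
      rw [map_sum]
      refine Finset.sum_congr rfl fun i _ => ?_
      have hxi : σ (x i) = ∑ k, σ (v k) * σ ((ρ (x i) k : A)) := by
        conv_lhs => rw [hρ (x i)]
        rw [hσsum]
        refine Finset.sum_congr rfl fun k _ => hmul _ _
      calc (h : A ≃+* A) (w i * σ (x i))
          = (h : A ≃+* A) ((∑ j, (ρ (w i) j : A) * v j) *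
              (∑ k, σ (v k) * σ ((ρ (x i) k : A)))) := by
            conv_lhs => rw [hρ (w i), hxi]
        _ = ∑ j, ∑ k, (h : A ≃+* A) (((ρ (w i) j : A) * v j) *
              (σ (v k) * σ ((ρ (x i) k : A)))) := by
            rw [Finset.sum_mul_sum, map_sum]
            exact Finset.sum_congr rfl fun j _ => map_sum _ _ _
        _ = ∑ j, ∑ k, (ρ (w i) j : A) * (h : A ≃+* A) (v j * σ (v k)) *
              σ ((ρ (x i) k : A)) := by
            refine Finset.sum_congr rfl fun j _ => Finset.sum_congr rfl fun k _ => ?_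
            have e1 : ((ρ (w i) j : A) * v j) * (σ (v k) * σ ((ρ (x i) k : A))) =
                (ρ (w i) j : A) * (v j * σ (v k)) * σ ((ρ (x i) k : A)) := by
              simp only [mul_assoc]
            rw [e1, map_mul, map_mul,
              hRfix _ (ρ (w i) j).2 _ h.2,
              hRfix _ (hσRmem _ (ρ (x i) k).2) _ h.2]
    have hswap : ∑ h : H, (h : A ≃+* A) (∑ i, w i * σ (x i)) =
        ∑ i, ∑ j, ∑ k, (ρ (w i) j : A) *
          (∑ h : H, (h : A ≃+* A) (v j * σ (v k))) * σ ((ρ (x i) k : A)) := by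
      rw [Finset.sum_congr rfl fun h _ => hexp h]
      rw [Finset.sum_comm]
      refine Finset.sum_congr rfl fun i _ => ?_
      rw [Finset.sum_comm]
      refine Finset.sum_congr rfl fun j _ => ?_
      rw [Finset.sum_comm]
      refine Finset.sum_congr rfl fun k _ => ?_
      simp [Finset.sum_mul, Finset.mul_sum]
    have hdiag : ∀ i, (∑ j, ∑ k, (ρ (w i) j : A) *
          (∑ h : H, (h : A ≃+* A) (v j * σ (v k))) * σ ((ρ (x i) k : A))) =
        γ * ∑ j, (ρ (w i) j : A) * σ ((ρ (x i) j : A)) := by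
      intro i
      rw [Finset.mul_sum]
      refine Finset.sum_congr rfl fun j _ => ?_
      rw [Finset.sum_eq_single j]
      · rw [hγtr j, ← mul_assoc, hγR _ (ρ (w i) j).2, mul_assoc]
      · intro k _ hk
        rw [(htro j k).mpr (Ne.symm hk)]
        simp
      · intro hj; exact absurd (Finset.mem_univ j) hj
    have hfin : γ * (∑ i, ∑ j, (ρ (w i) j : A) * σ ((ρ (x i) j : A))) = 0 := by
      rw [Finset.mul_sum, ← Finset.sum_congr rfl fun i _ => hdiag i, ← hswap, htr0]
    exact hγl _ hfin
  -- cardinalities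
  have hΦinj : Function.Injective Φ := by
    intro a b hab
    funext i
    exact hρinj (funext fun j => congrFun (congrFun hab i) j)
  have hcardAR : Nat.card A = Nat.card R ^ r := by
    have hbij2 : Function.Bijective ρ := by
      refine ⟨hρinj, fun c => ?_⟩
      refine ⟨∑ i, (c i : A) * v i, ?_⟩
      funext i
      have h0 : ∑ j, ((ρ (∑ i, (c i : A) * v i) j - c j : R) : A) * v j = 0 := by
        push_cast
        simp only [sub_mul, Finset.sum_sub_distrib]
        rw [← hρ (∑ i, (c i : A) * v i)]
        simp
      have := huniq _ h0 i
      exact sub_eq_zero.mp this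
    rw [Nat.card_eq_of_bijective ρ hbij2]
    simp [Nat.card_pi, Finset.prod_const]
  have hC0 : Nat.card C ≠ 0 := by
    have : Finite C := Subtype.finite
    exact Nat.card_ne_zero.mpr ⟨⟨0, C.zero_mem⟩, this⟩
  have hcardD : Nat.card (Φ '' (C : Set (Fin n → A))) = Nat.card C := by
    rw [Nat.card_image_of_injective hΦinj, SetLike.coe_sort_coe]
  have hcardLHS : Nat.card (Φ '' Cperp) = Nat.card Cperp :=
    Nat.card_image_of_injective hΦinj _
  have hkey : Nat.card Cperp = Nat.card Dperp := by
    have h1 : Nat.card C * Nat.card Cperp = Nat.card R ^ (r * n) := by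
      rw [hcardA, hcardAR, ← pow_mul]
    have h2 : Nat.card C * Nat.card Dperp = Nat.card R ^ (r * n) := by
      rw [← hcardD]; exact hcardR
    exact Nat.eq_of_mul_eq_mul_left (Nat.pos_of_ne_zero hC0) (h1.trans h2.symm)
  have hfinD : Dperp.Finite := Set.toFinite _
  refine Set.eq_of_subset_of_ncard_le hsub ?_ hfinD
  rw [← Nat.card_coe_set_eq, ← Nat.card_coe_set_eq, hcardLHS, hkey]
end

section
/- Assume 𝓑 is symmetric, i.e. M_v = M_vᵀ for every basis element v ∈ 𝓑. Then the ring A is commutative. -/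
open Matrix

/-- Lemma: if the `R`-basis `𝓑` is symmetric (every basis element has a
symmetric right-multiplication matrix), then the ring `A` is commutative. -/
theorem stmt_11 {A : Type*} [Ring A] [Fintype A] (R : Subring A)
    (hcentral : ∀ x ∈ R, ∀ a : A, x * a = a * x)
    (r : ℕ) (v : Fin r → A) (ρ : A → Fin r → R)
    (hρ : ∀ a : A, a = ∑ i, (ρ a i : A) * v i)
    (huniq : ∀ c : Fin r → R, ∑ i, (c i : A) * v i = 0 → ∀ i, c i = 0)
    (M : A → Matrix (Fin r) (Fin r) R)
    (hM : ∀ (a : A) (i : Fin r), v i * a = ∑ j, (M a i j : A) * v j)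
    (hsymm : ∀ i : Fin r, M (v i) = (M (v i))ᵀ) :
    ∀ a b : A, a * b = b * a := by
  -- R is commutative
  have Rcomm : ∀ x y : R, x * y = y * x := by
    intro x y
    exact Subtype.ext (hcentral x x.2 y)
  -- symmetry of M (v i) entrywise
  have hsymm' : ∀ (i : Fin r) (p q : Fin r), M (v i) p q = M (v i) q p := by
    intro i p q
    have := congrFun (congrFun (hsymm i) p) q
    simpa using this
  -- uniqueness of coefficients
  have huniq2 : ∀ c d : Fin r → R,
      (∑ i, (c i : A) * v i) = ∑ i, (d i : A) * v i → ∀ i, c i = d i := by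
    intro c d h i
    have h0 : ∑ i, ((c i - d i : R) : A) * v i = 0 := by
      push_cast
      simp only [sub_mul]
      rw [Finset.sum_sub_distrib, h, sub_self]
    have := huniq (fun i => c i - d i) h0 i
    exact sub_eq_zero.mp this
  -- injectivity via left multiplication by basis elements
  have hinj : ∀ a b : A, (∀ i, v i * a = v i * b) → a = b := by
    intro a b h
    calc a = 1 * a := (one_mul a).symm
    _ = (∑ i, (ρ 1 i : A) * v i) * a := by rw [← hρ 1]
    _ = ∑ i, (ρ 1 i : A) * (v i * a) := by rw [Finset.sum_mul]; simp [mul_assoc]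
    _ = ∑ i, (ρ 1 i : A) * (v i * b) := by simp only [h]
    _ = (∑ i, (ρ 1 i : A) * v i) * b := by rw [Finset.sum_mul]; simp [mul_assoc]
    _ = b := by rw [← hρ 1, one_mul]
  -- expansion of M a in terms of M (v i)
  have hexpand : ∀ (a : A) (p q : Fin r),
      M a p q = ∑ i, ρ a i * M (v i) p q := by
    intro a p q
    refine huniq2 (M a p) (fun q => ∑ i, ρ a i * M (v i) p q) ?_ q
    have key : v p * a = ∑ q, ((∑ i, ρ a i * M (v i) p q : R) : A) * v q := by
      conv_lhs => rw [hρ a]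
      rw [Finset.mul_sum]
      have step : ∀ i, v p * ((ρ a i : A) * v i)
          = ∑ q, ((ρ a i : A) * (M (v i) p q : A)) * v q := by
        intro i
        rw [← mul_assoc, ← hcentral _ (ρ a i).2 (v p), mul_assoc, hM (v i) p,
          Finset.mul_sum]
        simp [mul_assoc]
      rw [Finset.sum_congr rfl (fun i _ => step i), Finset.sum_comm]
      refine Finset.sum_congr rfl fun q _ => ?_
      push_cast
      rw [Finset.sum_mul]
    exact (hM a p).symm.trans key
  -- every M a is symmetric
  have hMsymm : ∀ (a : A) (p q : Fin r), M a p q = M a q p := by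
    intro a p q
    rw [hexpand a p q, hexpand a q p]
    exact Finset.sum_congr rfl fun i _ => by rw [hsymm' i p q]
  -- multiplicativity
  have hMmul : ∀ (a b : A) (p q : Fin r),
      M (a * b) p q = ∑ s, M a p s * M b s q := by
    intro a b p q
    refine huniq2 (M (a * b) p) (fun q => ∑ s, M a p s * M b s q) ?_ q
    have key : v p * (a * b) = ∑ q, ((∑ s, M a p s * M b s q : R) : A) * v q := by
      rw [← mul_assoc, hM a p, Finset.sum_mul]
      have step : ∀ s, ((M a p s : A) * v s) * b
          = ∑ q, ((M a p s : A) * (M b s q : A)) * v q := by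
        intro s
        rw [mul_assoc, hM b s, Finset.mul_sum]
        simp [mul_assoc]
      rw [Finset.sum_congr rfl (fun s _ => step s), Finset.sum_comm]
      refine Finset.sum_congr rfl fun q _ => ?_
      push_cast
      rw [Finset.sum_mul]
    exact (hM (a * b) p).symm.trans key
  -- conclusion
  intro a b
  apply hinj
  intro p
  rw [hM (a * b) p, hM (b * a) p]
  refine Finset.sum_congr rfl fun q _ => ?_
  congr 1
  norm_cast
  rw [hMmul a b p q, hMsymm (b * a) p q, hMmul b a q p]
  refine Finset.sum_congr rfl fun s _ => ?_
  rw [hMsymm a p s, hMsymm b s q, Rcomm]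
end

section
/- Assume 𝓑 is symmetric and that σ fixes every element of 𝓑 (σ(v) = v for all v ∈ 𝓑). Then for all x, y ∈ A^n, if ⟨x,y⟩_{A^n} = 0 then ⟨Φ(x),Φ(y)⟩_{R^{nr}} = 0. -/
open Matrix

/-- Lemma: if the `R`-basis `𝓑` is symmetric and the involution `σ` fixes
every basis element, then the coordinate map `Φ` preserves orthogonality:
`⟨x,y⟩_{A^n} = 0` implies `⟨Φ(x),Φ(y)⟩_{R^{nr}} = 0`. -/
theorem stmt_12 {A : Type*} [Ring A] [Fintype A] (R : Subring A)
    (hcentral : ∀ x ∈ R, ∀ a : A, x * a = a * x)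
    (r : ℕ) (v : Fin r → A) (ρ : A → Fin r → R)
    (hρ : ∀ a : A, a = ∑ i, (ρ a i : A) * v i)
    (huniq : ∀ c : Fin r → R, ∑ i, (c i : A) * v i = 0 → ∀ i, c i = 0)
    (M : A → Matrix (Fin r) (Fin r) R)
    (hM : ∀ (a : A) (i : Fin r), v i * a = ∑ j, (M a i j : A) * v j)
    (hsymm : ∀ i : Fin r, M (v i) = (M (v i))ᵀ)
    (σ : A → A)
    (hbij : Function.Bijective σ)
    (hadd : ∀ a b : A, σ (a + b) = σ a + σ b)
    (hmul : ∀ a b : A, σ (a * b) = σ b * σ a)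
    (hone : σ 1 = 1)
    (hinv : ∀ a : A, σ (σ a) = a)
    (hσR : σ '' (R : Set A) = (R : Set A))
    (hfix : ∀ i : Fin r, σ (v i) = v i)
    (n : ℕ) (x y : Fin n → A)
    (hxy : ∑ i, x i * σ (y i) = 0) :
    ∑ i, ∑ j, (ρ (x i) j : A) * σ ((ρ (y i) j : A)) = 0 := by
  letI : CommRing R :=
    { (inferInstance : Ring R) with
      mul_comm := fun p q => Subtype.ext (hcentral p p.2 q) }
  -- σ restricted to R
  have hsR : ∀ t : R, σ (t : A) ∈ R := fun t => by
    have : σ (t : A) ∈ σ '' (R : Set A) := ⟨t, t.2, rfl⟩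
    rwa [hσR] at this
  set s : R → R := fun t => ⟨σ (t : A), hsR t⟩ with hs
  have hs_coe : ∀ t : R, ((s t : R) : A) = σ (t : A) := fun _ => rfl
  set a : Fin n → Fin r → R := fun i j => ρ (x i) j with ha
  set c : Fin n → Fin r → R := fun i j => ρ (y i) j with hc0
  set e : Fin r → R := ρ 1 with he0
  have hf : ∀ (m : ℕ) (g : Fin m → A), σ (∑ i, g i) = ∑ i, σ (g i) := by
    intro m g
    exact map_sum (AddMonoidHom.mk' σ hadd) g Finset.univ
  -- uniqueness of coefficients
  have huniq' : ∀ d d' : Fin r → R,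
      (∑ j, (d j : A) * v j) = (∑ j, (d' j : A) * v j) → ∀ j, d j = d' j := by
    intro d d' h j
    have h0 : ∑ i, ((d - d') i : A) * v i = 0 := by
      simp only [Pi.sub_apply]
      push_cast
      simp only [sub_mul, Finset.sum_sub_distrib, h, sub_self]
    have := huniq (d - d') h0 j
    have := sub_eq_zero.mp (by simpa using this)
    exact this
  -- expansion of σ (y i)
  have hσy : ∀ i, σ (y i) = ∑ k, ((s (c i k) : R) : A) * v k := by
    intro i
    conv_lhs => rw [hρ (y i)]
    rw [hf]
    refine Finset.sum_congr rfl fun k _ => ?_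
    rw [hmul, hfix, hs_coe]
    exact (hcentral _ (hsR (c i k)) (v k)).symm
  -- expand the inner product
  have hexp : ∀ i, x i * σ (y i) =
      ∑ l, ((∑ j, ∑ k, a i j * s (c i k) * M (v k) j l : R) : A) * v l := by
    intro i
    rw [hσy i]
    conv_lhs => rw [hρ (x i)]
    rw [Finset.sum_mul_sum]
    have step : ∀ j k, ((a i j : A) * v j) * (((s (c i k) : R) : A) * v k) =
        ∑ l, ((a i j * s (c i k) * M (v k) j l : R) : A) * v l := by
      intro j k
      have h1 : v j * (((s (c i k) : R) : A) * v k)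
          = ((s (c i k) : R) : A) * (v j * v k) := by
        rw [← mul_assoc, ← hcentral _ (hsR (c i k)) (v j), mul_assoc]
      rw [mul_assoc, h1, hM (v k) j, Finset.mul_sum, Finset.mul_sum]
      refine Finset.sum_congr rfl fun l _ => ?_
      push_cast
      rw [← mul_assoc, ← mul_assoc]
    calc (∑ j, ∑ k, ((a i j : A) * v j) * (((s (c i k) : R) : A) * v k))
        = ∑ j, ∑ k, ∑ l, ((a i j * s (c i k) * M (v k) j l : R) : A) * v l := by
          exact Finset.sum_congr rfl fun j _ => Finset.sum_congr rfl fun k _ => step j k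
      _ = ∑ j, ∑ l, ∑ k, ((a i j * s (c i k) * M (v k) j l : R) : A) * v l :=
          Finset.sum_congr rfl fun j _ => Finset.sum_comm
      _ = ∑ l, ∑ j, ∑ k, ((a i j * s (c i k) * M (v k) j l : R) : A) * v l :=
          Finset.sum_comm
      _ = ∑ l, ((∑ j, ∑ k, a i j * s (c i k) * M (v k) j l : R) : A) * v l := by
          refine Finset.sum_congr rfl fun l _ => ?_
          push_cast
          rw [Finset.sum_mul]
          exact Finset.sum_congr rfl fun j _ => (Finset.sum_mul _ _ _).symm
  -- coefficients of the inner product vanish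
  have hT : ∀ l, ∑ i, ∑ j, ∑ k, a i j * s (c i k) * M (v k) j l = 0 := by
    have h0 : ∑ l, ((∑ i, ∑ j, ∑ k, a i j * s (c i k) * M (v k) j l : R) : A) * v l = 0 := by
      rw [← hxy]
      conv_rhs => rw [show (∑ i, x i * σ (y i)) =
        ∑ i, ∑ l, ((∑ j, ∑ k, a i j * s (c i k) * M (v k) j l : R) : A) * v l from
        Finset.sum_congr rfl fun i _ => hexp i]
      rw [Finset.sum_comm]
      refine Finset.sum_congr rfl fun l _ => ?_
      push_cast
      rw [Finset.sum_mul]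
    exact huniq _ h0
  -- identity: ∑ l, e l * M (v k) l j = ρ (v k) j
  have he : ∀ k j, ∑ l, e l * M (v k) l j = ρ (v k) j := by
    intro k j
    refine huniq' (fun j => ∑ l, e l * M (v k) l j) (ρ (v k)) ?_ j
    calc ∑ j, ((∑ l, e l * M (v k) l j : R) : A) * v j
        = ∑ j, ∑ l, ((e l * M (v k) l j : R) : A) * v j := by
          refine Finset.sum_congr rfl fun j _ => ?_
          push_cast
          rw [Finset.sum_mul]
      _ = ∑ l, ∑ j, ((e l * M (v k) l j : R) : A) * v j := Finset.sum_comm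
      _ = ∑ l, (e l : A) * (v l * v k) := by
          refine Finset.sum_congr rfl fun l _ => ?_
          rw [hM (v k) l, Finset.mul_sum]
          refine Finset.sum_congr rfl fun j _ => ?_
          push_cast
          rw [mul_assoc]
      _ = (∑ l, (e l : A) * v l) * v k := by
          rw [Finset.sum_mul]
          exact Finset.sum_congr rfl fun l _ => (mul_assoc _ _ _).symm
      _ = v k := by rw [← hρ 1, one_mul]
      _ = ∑ j, ((ρ (v k) j : A)) * v j := hρ (v k)
  -- symmetric version
  have he' : ∀ k j, ∑ l, e l * M (v k) j l = ρ (v k) j := by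
    intro k j
    rw [← he k j]
    refine Finset.sum_congr rfl fun l _ => ?_
    congr 1
    conv_rhs => rw [hsymm k]
    rfl
  -- identity: ∑ k, s (c i k) * ρ (v k) j = s (c i j)
  have hcc : ∀ i j, ∑ k, s (c i k) * ρ (v k) j = s (c i j) := by
    intro i j
    refine huniq' (fun j => ∑ k, s (c i k) * ρ (v k) j) (fun j => s (c i j)) ?_ j
    calc ∑ j, ((∑ k, s (c i k) * ρ (v k) j : R) : A) * v j
        = ∑ j, ∑ k, ((s (c i k) * ρ (v k) j : R) : A) * v j := by
          refine Finset.sum_congr rfl fun j _ => ?_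
          push_cast
          rw [Finset.sum_mul]
      _ = ∑ k, ∑ j, ((s (c i k) * ρ (v k) j : R) : A) * v j := Finset.sum_comm
      _ = ∑ k, ((s (c i k) : R) : A) * v k := by
          refine Finset.sum_congr rfl fun k _ => ?_
          conv_rhs => rw [hρ (v k)]
          rw [Finset.mul_sum]
          refine Finset.sum_congr rfl fun j _ => ?_
          push_cast
          rw [mul_assoc]
      _ = σ (y i) := (hσy i).symm
      _ = ∑ j, ((s (c i j) : R) : A) * v j := hσy i
  -- final computation in R
  have hfinal : ∑ i, ∑ j, a i j * s (c i j) = 0 := by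
    have key : ∀ i j, a i j * s (c i j)
        = ∑ k, ∑ l, e l * (a i j * s (c i k) * M (v k) j l) := by
      intro i j
      rw [← hcc i j, Finset.mul_sum]
      refine Finset.sum_congr rfl fun k _ => ?_
      rw [← he' k j, Finset.mul_sum, Finset.mul_sum]
      refine Finset.sum_congr rfl fun l _ => ?_
      ring
    calc ∑ i, ∑ j, a i j * s (c i j)
        = ∑ i, ∑ j, ∑ k, ∑ l, e l * (a i j * s (c i k) * M (v k) j l) :=
          Finset.sum_congr rfl fun i _ => Finset.sum_congr rfl fun j _ => key i j
      _ = ∑ i, ∑ j, ∑ l, ∑ k, e l * (a i j * s (c i k) * M (v k) j l) :=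
          Finset.sum_congr rfl fun i _ => Finset.sum_congr rfl fun j _ => Finset.sum_comm
      _ = ∑ i, ∑ l, ∑ j, ∑ k, e l * (a i j * s (c i k) * M (v k) j l) :=
          Finset.sum_congr rfl fun i _ => Finset.sum_comm
      _ = ∑ l, ∑ i, ∑ j, ∑ k, e l * (a i j * s (c i k) * M (v k) j l) :=
          Finset.sum_comm
      _ = ∑ l, e l * ∑ i, ∑ j, ∑ k, a i j * s (c i k) * M (v k) j l := by
          refine Finset.sum_congr rfl fun l _ => ?_
          rw [Finset.mul_sum]
          refine Finset.sum_congr rfl fun i _ => ?_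
          rw [Finset.mul_sum]
          refine Finset.sum_congr rfl fun j _ => ?_
          rw [Finset.mul_sum]
      _ = ∑ l, e l * 0 := Finset.sum_congr rfl fun l _ => by rw [hT l]
      _ = 0 := by simp
  -- conclude
  have : ((∑ i, ∑ j, a i j * s (c i j) : R) : A) = 0 := by rw [hfinal]; rfl
  calc ∑ i, ∑ j, (ρ (x i) j : A) * σ ((ρ (y i) j : A))
      = ∑ i, ∑ j, ((a i j * s (c i j) : R) : A) := by
        refine Finset.sum_congr rfl fun i _ => Finset.sum_congr rfl fun j _ => ?_
        rfl
    _ = ((∑ i, ∑ j, a i j * s (c i j) : R) : A) := by push_cast; rfl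
    _ = 0 := this
end

section
/- Assume 𝓑 is symmetric, σ fixes every element of 𝓑, and let C ⊆ A^n be a left A-submodule (a linear code of length n over A). Assume furthermore the cardinality identities |C| · |C^⊥| = |A|^n and |Φ(C)| · |Φ(C)^⊥| = |R|^{rn} (these hold whenever A and R are finite Frobenius rings, by Wood's theorem). Then Φ(C^⊥) = Φ(C)^⊥. -/
open Matrix

/-- Theorem: if the `R`-basis `𝓑` is symmetric, `σ` fixes every basis element,
and `C` is a linear code of length `n` over `A`, then (assuming the cardinality
identities `|C|·|C^⊥| = |A|^n` and `|Φ(C)|·|Φ(C)^⊥| = |R|^{rn}`, which hold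
when `A` and `R` are Frobenius) `Φ(C^⊥) = Φ(C)^⊥`. -/
theorem stmt_13 {A : Type*} [Ring A] [Fintype A] (R : Subring A)
    (hcentral : ∀ x ∈ R, ∀ a : A, x * a = a * x)
    (r : ℕ) (v : Fin r → A) (ρ : A → Fin r → R)
    (hρ : ∀ a : A, a = ∑ i, (ρ a i : A) * v i)
    (huniq : ∀ c : Fin r → R, ∑ i, (c i : A) * v i = 0 → ∀ i, c i = 0)
    (M : A → Matrix (Fin r) (Fin r) R)
    (hM : ∀ (a : A) (i : Fin r), v i * a = ∑ j, (M a i j : A) * v j)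
    (hsymm : ∀ i : Fin r, M (v i) = (M (v i))ᵀ)
    (σ : A → A)
    (hbij : Function.Bijective σ)
    (hadd : ∀ a b : A, σ (a + b) = σ a + σ b)
    (hmul : ∀ a b : A, σ (a * b) = σ b * σ a)
    (hone : σ 1 = 1)
    (hinv : ∀ a : A, σ (σ a) = a)
    (hσR : σ '' (R : Set A) = (R : Set A))
    (hfix : ∀ i : Fin r, σ (v i) = v i)
    (n : ℕ) (C : Submodule A (Fin n → A))
    (hcardA : Nat.card C *
        Nat.card {w : Fin n → A | ∀ c ∈ C, ∑ i, w i * σ (c i) = 0} =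
        Nat.card A ^ n)
    (hcardR : Nat.card ((fun x : Fin n → A => fun i j => ρ (x i) j) ''
          (C : Set (Fin n → A))) *
        Nat.card {u : Fin n → Fin r → R |
          ∀ x ∈ C, ∑ i, ∑ j, (u i j : A) * σ ((ρ (x i) j : A)) = 0} =
        Nat.card R ^ (r * n)) :
    (fun x : Fin n → A => fun i j => ρ (x i) j) ''
        {w : Fin n → A | ∀ c ∈ C, ∑ i, w i * σ (c i) = 0}
      = {u : Fin n → Fin r → R |
          ∀ x ∈ C, ∑ i, ∑ j, (u i j : A) * σ ((ρ (x i) j : A)) = 0} := by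
  classical
  set Φ : (Fin n → A) → (Fin n → Fin r → R) := fun x => fun i j => ρ (x i) j with hΦ
  set S : Set (Fin n → A) := {w | ∀ c ∈ C, ∑ i, w i * σ (c i) = 0} with hS
  set T : Set (Fin n → Fin r → R) :=
    {u | ∀ x ∈ C, ∑ i, ∑ j, (u i j : A) * σ ((ρ (x i) j : A)) = 0} with hT
  -- σ as an additive hom, and sum compatibility
  have hσsum : ∀ {ι : Type} (s : Finset ι) (f : ι → A),
      σ (∑ i ∈ s, f i) = ∑ i ∈ s, σ (f i) := by
    intro ι s f
    exact map_sum (AddMonoidHom.mk' σ hadd) f s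
  -- σ maps R to R
  have hmemR : ∀ x : A, x ∈ R → σ x ∈ R := by
    intro x hx
    have : σ x ∈ σ '' (R : Set A) := Set.mem_image_of_mem σ hx
    rwa [hσR] at this
  -- uniqueness of coefficients, two-sided form
  have huniq' : ∀ c d : Fin r → R,
      ∑ i, (c i : A) * v i = ∑ i, (d i : A) * v i → ∀ i, c i = d i := by
    intro c d h i
    have h0 : ∑ i, ((c - d) i : A) * v i = 0 := by
      simp only [Pi.sub_apply]
      push_cast
      simp only [sub_mul]
      rw [Finset.sum_sub_distrib, h, sub_self]
    have := huniq (c - d) h0 i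
    have : c i - d i = 0 := this
    exact sub_eq_zero.mp this
  -- key1 : σ (M (v b) a t) = M (v a) b t  (in A)
  have key1 : ∀ a b t : Fin r, σ ((M (v b) a t : A)) = (M (v a) b t : A) := by
    intro a b t
    have hab : v b * v a = ∑ s, σ ((M (v b) a s : A)) * v s := by
      have h1 : σ (v a * v b) = v b * v a := by
        rw [hmul, hfix, hfix]
      rw [← h1, hM (v b) a, hσsum]
      refine Finset.sum_congr rfl fun s _ => ?_
      rw [hmul, hfix]
      exact (hcentral _ (hmemR _ (M (v b) a s).2) (v s)).symm
    have hab2 : v b * v a = ∑ s, ((M (v a) b s : A)) * v s := hM (v a) b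
    -- uniqueness
    have := huniq' (fun s => ⟨σ ((M (v b) a s : A)), hmemR _ (M (v b) a s).2⟩)
      (M (v a) b) (by rw [← hab2, ← hab])
    exact congrArg Subtype.val (this t)
  -- key2 : M (v k) j t = M (v t) k j  (in A)
  have key2 : ∀ k j t : Fin r, (M (v k) j t : A) = (M (v t) k j : A) := by
    intro k j t
    have h1 : (M (v k) j t : A) = σ ((M (v j) k t : A)) := by
      rw [← key1 j k t, hinv]
    have h2 : M (v j) k t = M (v j) t k := by
      conv_lhs => rw [hsymm j]
      rfl
    rw [h1, h2, key1 t j k]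
    have h3 : M (v t) j k = M (v t) k j := by
      conv_lhs => rw [hsymm t]
      rfl
    rw [h3]
  -- coefficients of v t * b
  have L2 : ∀ (b : A) (t j : Fin r),
      (ρ (v t * b) j : A) = ∑ k, (ρ b k : A) * (M (v k) t j : A) := by
    intro b t j
    have hlhs : v t * b = ∑ j, (ρ (v t * b) j : A) * v j := hρ _
    have hrhs : v t * b =
        ∑ j, ((∑ k, ρ b k * M (v k) t j : R) : A) * v j := by
      push_cast
      calc v t * b = v t * ∑ k, (ρ b k : A) * v k := by rw [← hρ]
        _ = ∑ k, (ρ b k : A) * (v t * v k) := by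
            rw [Finset.mul_sum]
            refine Finset.sum_congr rfl fun k _ => ?_
            rw [← mul_assoc, ← hcentral _ (ρ b k).2 (v t), mul_assoc]
        _ = ∑ k, (ρ b k : A) * ∑ j, (M (v k) t j : A) * v j := by
            simp_rw [hM]
        _ = ∑ k, ∑ j, (ρ b k : A) * (M (v k) t j : A) * v j := by
            simp_rw [Finset.mul_sum, mul_assoc]
        _ = ∑ j, ∑ k, (ρ b k : A) * (M (v k) t j : A) * v j := Finset.sum_comm
        _ = ∑ j, (∑ k, (ρ b k : A) * (M (v k) t j : A)) * v j := by
            simp_rw [Finset.sum_mul]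
    have := huniq' (ρ (v t * b)) (fun j => ∑ k, ρ b k * M (v k) t j)
      (by rw [← hlhs, ← hrhs])
    rw [congrArg (Subtype.val) (this j)]
    push_cast
    rfl
  -- expansion of σ b
  have Lσ : ∀ b : A, σ b = ∑ k, v k * σ ((ρ b k : A)) := by
    intro b
    conv_lhs => rw [hρ b]
    rw [hσsum]
    refine Finset.sum_congr rfl fun k _ => ?_
    rw [hmul, hfix]
  -- main identity
  have L : ∀ a b : A, a * σ b =
      ∑ t, (∑ j, (ρ a j : A) * σ ((ρ (v t * b) j : A))) * v t := by
    intro a b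
    have hστ : ∀ (t j : Fin r), σ ((ρ (v t * b) j : A)) =
        ∑ k, (M (v t) k j : A) * σ ((ρ b k : A)) := by
      intro t j
      rw [L2, hσsum]
      refine Finset.sum_congr rfl fun k _ => ?_
      rw [hmul, key1]
    calc a * σ b = (∑ j, (ρ a j : A) * v j) * ∑ k, v k * σ ((ρ b k : A)) := by
          rw [← hρ, ← Lσ]
      _ = ∑ j, ∑ k, (ρ a j : A) * v j * (v k * σ ((ρ b k : A))) := by
          rw [Finset.sum_mul]; simp_rw [Finset.mul_sum]
      _ = ∑ j, ∑ k, ∑ t, (ρ a j : A) * ((M (v t) k j : A) * σ ((ρ b k : A))) * v t := by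
          refine Finset.sum_congr rfl fun j _ => Finset.sum_congr rfl fun k _ => ?_
          rw [mul_assoc, ← mul_assoc (v j) (v k), hM (v k) j, Finset.sum_mul,
            Finset.mul_sum]
          refine Finset.sum_congr rfl fun t _ => ?_
          rw [key2 k j t]
          have c1 : (M (v t) k j : A) ∈ R := (M (v t) k j).2
          have c2 : σ ((ρ b k : A)) ∈ R := hmemR _ (ρ b k).2
          rw [mul_assoc ((M (v t) k j : A)) (v t) _, ← hcentral _ c2 (v t),
            ← mul_assoc, ← mul_assoc, ← mul_assoc]
      _ = ∑ j, ∑ t, ∑ k, (ρ a j : A) * ((M (v t) k j : A) * σ ((ρ b k : A))) * v t :=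
          Finset.sum_congr rfl fun j _ => Finset.sum_comm
      _ = ∑ t, ∑ j, ∑ k, (ρ a j : A) * ((M (v t) k j : A) * σ ((ρ b k : A))) * v t :=
          Finset.sum_comm
      _ = ∑ t, (∑ j, (ρ a j : A) * σ ((ρ (v t * b) j : A))) * v t := by
          refine Finset.sum_congr rfl fun t _ => ?_
          rw [Finset.sum_mul]
          refine Finset.sum_congr rfl fun j _ => ?_
          rw [hστ t j, Finset.mul_sum, Finset.sum_mul]
  -- the inclusion T ⊆ Φ '' S
  have hsub : T ⊆ Φ '' S := by
    intro u hu
    set w : Fin n → A := fun i => ∑ j, (u i j : A) * v j with hw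
    have hρw : ∀ i, ρ (w i) = u i := by
      intro i
      have : ∑ j, (ρ (w i) j : A) * v j = ∑ j, (u i j : A) * v j := by
        rw [← hρ (w i)]
      funext j
      exact huniq' (ρ (w i)) (u i) this j
    refine ⟨w, ?_, ?_⟩
    · intro c hc
      have hcalc : ∑ i, w i * σ (c i) =
          ∑ t, (∑ i, ∑ j, (u i j : A) * σ ((ρ (v t * c i) j : A))) * v t := by
        calc ∑ i, w i * σ (c i)
            = ∑ i, ∑ t, (∑ j, (ρ (w i) j : A) * σ ((ρ (v t * c i) j : A))) * v t := by
              exact Finset.sum_congr rfl fun i _ => L (w i) (c i)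
          _ = ∑ i, ∑ t, (∑ j, (u i j : A) * σ ((ρ (v t * c i) j : A))) * v t :=
              Finset.sum_congr rfl fun i _ => Finset.sum_congr rfl fun t _ => by
                rw [hρw i]
          _ = ∑ t, ∑ i, (∑ j, (u i j : A) * σ ((ρ (v t * c i) j : A))) * v t :=
              Finset.sum_comm
          _ = ∑ t, (∑ i, ∑ j, (u i j : A) * σ ((ρ (v t * c i) j : A))) * v t := by
              refine Finset.sum_congr rfl fun t _ => ?_
              rw [Finset.sum_mul]
      rw [hcalc]
      refine Finset.sum_eq_zero fun t _ => ?_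
      have hmem : v t • c ∈ C := C.smul_mem (v t) hc
      have := hu (v t • c) hmem
      have heq : ∀ i j, ρ ((v t • c) i) j = ρ (v t * c i) j := by
        intro i j; rfl
      simp only [heq] at this
      rw [this, zero_mul]
    · funext i j
      exact congrFun (hρw i) j
  -- injectivity of ρ and Φ
  have hρinj : Function.Injective ρ := by
    intro a b h
    rw [hρ a, hρ b, h]
  have hΦinj : Function.Injective Φ := by
    intro x y h
    funext i
    apply hρinj
    funext j
    exact congrFun (congrFun h i) j
  -- |A| = |R|^r
  have hρsurj : Function.Surjective ρ := by
    intro c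
    refine ⟨∑ i, (c i : A) * v i, ?_⟩
    funext i
    exact huniq' (ρ (∑ i, (c i : A) * v i)) c (by rw [← hρ]) i
  have hA : Nat.card A = Nat.card R ^ r := by
    rw [Nat.card_congr (Equiv.ofBijective ρ ⟨hρinj, hρsurj⟩), Nat.card_pi,
      Finset.prod_const, Finset.card_univ, Fintype.card_fin]
  -- cardinality bookkeeping
  have hcard1 : Nat.card (Φ '' S) = Nat.card S := by
    rw [Nat.card_coe_set_eq, Nat.card_coe_set_eq,
      Set.ncard_image_of_injective _ hΦinj]
  have hcard2 : Nat.card (Φ '' (C : Set (Fin n → A))) = Nat.card C := by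
    rw [Nat.card_coe_set_eq, Set.ncard_image_of_injective _ hΦinj,
      ← Nat.card_coe_set_eq]
    rfl
  have hCpos : 0 < Nat.card C := Nat.card_pos
  have hST : Nat.card S = Nat.card T := by
    have e1 : Nat.card C * Nat.card S = Nat.card R ^ (r * n) := by
      rw [hcardA, hA, ← pow_mul]
    have e2 : Nat.card C * Nat.card T = Nat.card R ^ (r * n) := by
      rw [← hcard2]; exact hcardR
    exact Nat.eq_of_mul_eq_mul_left hCpos (by rw [e1, e2])
  have hfin : (Φ '' S).Finite := Set.toFinite _
  have hle : (Φ '' S).ncard ≤ T.ncard := by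
    rw [← Nat.card_coe_set_eq, ← Nat.card_coe_set_eq, hcard1, hST]
  exact (Set.eq_of_subset_of_ncard_le hsub hle hfin).symm
end

section
/- Assume 𝓑 is symmetric, i.e. M_v = M_vᵀ for every basis element v ∈ 𝓑. Then for all a, b ∈ A, the Euclidean dot products of coordinate vectors satisfy ρ(a) · ρ(b) = ρ(1) · ρ(ab); in particular, in A = F[x]/(x^r) with a symmetric F-basis one has ρ(x̄^m) · ρ(x̄^n) = ρ(1) · ρ(x̄^{m+n}) for all m, n ≥ 0. -/
open Matrix

/-- Lemma: if the `R`-basis `𝓑` is symmetric, then the Euclidean dot products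
of coordinate vectors satisfy `ρ(a) · ρ(b) = ρ(1) · ρ(ab)` for all `a, b ∈ A`. -/
theorem stmt_15 {A : Type*} [Ring A] [Fintype A] (R : Subring A)
    (hcentral : ∀ x ∈ R, ∀ a : A, x * a = a * x)
    (r : ℕ) (v : Fin r → A) (ρ : A → Fin r → R)
    (hρ : ∀ a : A, a = ∑ i, (ρ a i : A) * v i)
    (huniq : ∀ c : Fin r → R, ∑ i, (c i : A) * v i = 0 → ∀ i, c i = 0)
    (M : A → Matrix (Fin r) (Fin r) R)
    (hM : ∀ (a : A) (i : Fin r), v i * a = ∑ j, (M a i j : A) * v j)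
    (hsymm : ∀ i : Fin r, M (v i) = (M (v i))ᵀ) :
    ∀ a b : A, ∑ i, ρ a i * ρ b i = ∑ i, ρ 1 i * ρ (a * b) i := by
  have hcomm : ∀ x y : R, x * y = y * x := by
    intro x y
    exact Subtype.ext (hcentral x.1 x.2 y.1)
  have huniq' : ∀ c d : Fin r → R,
      ∑ i, (c i : A) * v i = ∑ i, (d i : A) * v i → ∀ i, c i = d i := by
    intro c d h i
    have h0 : ∑ i, ((c i - d i : R) : A) * v i = 0 := by
      push_cast
      simp only [sub_mul, Finset.sum_sub_distrib, h, sub_self]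
    have := huniq (fun i => c i - d i) h0 i
    exact sub_eq_zero.mp this
  have key : ∀ (x b : A) (j : Fin r), ρ (x * b) j = ∑ i, ρ x i * M b i j := by
    intro x b j
    refine huniq' (ρ (x * b)) (fun j => ∑ i, ρ x i * M b i j) ?_ j
    have : x * b = ∑ j, ((∑ i, ρ x i * M b i j : R) : A) * v j := by
      calc x * b = ∑ i, (ρ x i : A) * (v i * b) := by
              conv_lhs => rw [hρ x]
              rw [Finset.sum_mul]
              simp [mul_assoc]
        _ = ∑ i, (ρ x i : A) * ∑ j, (M b i j : A) * v j := by
              simp only [hM]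
        _ = ∑ j, ((∑ i, ρ x i * M b i j : R) : A) * v j := by
              push_cast
              simp only [Finset.mul_sum, Finset.sum_mul]
              rw [Finset.sum_comm]
              simp [mul_assoc]
    rw [← this, ← hρ (x * b)]
  have hM' : ∀ (b : A) (i j : Fin r), M b i j = ∑ k, ρ b k * M (v k) i j := by
    intro b i j
    refine huniq' (M b i) (fun j => ∑ k, ρ b k * M (v k) i j) ?_ j
    have : v i * b = ∑ j, ((∑ k, ρ b k * M (v k) i j : R) : A) * v j := by
      calc v i * b = ∑ k, (ρ b k : A) * (v i * v k) := by
              conv_lhs => rw [hρ b]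
              rw [Finset.mul_sum]
              refine Finset.sum_congr rfl fun k _ => ?_
              rw [← mul_assoc, ← hcentral _ (ρ b k).2 (v i), mul_assoc]
        _ = ∑ k, (ρ b k : A) * ∑ j, (M (v k) i j : A) * v j := by
              simp only [hM]
        _ = ∑ j, ((∑ k, ρ b k * M (v k) i j : R) : A) * v j := by
              push_cast
              simp only [Finset.mul_sum, Finset.sum_mul]
              rw [Finset.sum_comm]
              simp [mul_assoc]
    rw [← this, ← hM b i]
  have hMsymm : ∀ (b : A) (i j : Fin r), M b i j = M b j i := by
    intro b i j
    rw [hM' b i j, hM' b j i]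
    refine Finset.sum_congr rfl fun k _ => ?_
    congr 1
    have := congrFun (congrFun (hsymm k) i) j
    exact this
  intro a b
  have hb : ∀ i, ρ b i = ∑ j, ρ 1 j * M b j i := by
    intro i
    rw [← one_mul b, key 1 b i, one_mul]
  calc ∑ i, ρ a i * ρ b i
      = ∑ i, ∑ j, ρ a i * (ρ 1 j * M b j i) := by
        simp only [hb, Finset.mul_sum]
    _ = ∑ j, ∑ i, ρ 1 j * (ρ a i * M b i j) := by
        rw [Finset.sum_comm]
        refine Finset.sum_congr rfl fun j _ => Finset.sum_congr rfl fun i _ => ?_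
        rw [hMsymm b j i, ← mul_assoc, hcomm (ρ a i) (ρ 1 j), mul_assoc]
    _ = ∑ i, ρ 1 i * ρ (a * b) i := by
        simp only [key, Finset.mul_sum]
end
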